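/- Let (H,•,1,Δ,ε,T) be a Hopf algebra, let ⇀ be the left adjoint action a⇀b := a₁•b•T(a₂), and let ↼ be the trivial right action a↼b := a ε(b). Then (H,⇀,↼) is a matched pair of actions on H if and only if Δ is left H-linear with respect to ⇀, i.e. Δ(a⇀b) = (a₁⇀b₁)⊗(a₂⇀b₂) for all a,b. -/

import Mathlib

open TensorProduct

noncomputable section

variable (k H : Type*) [Field k] [Ring H] [HopfAlgebra k H]

/-- Multiplication of `H` as a linear map. -/
def mu : H ⊗[k] H →ₗ[k] H := LinearMap.mul' k H
/-- Comultiplication. -/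
def delta : H →ₗ[k] H ⊗[k] H := Coalgebra.comul
/-- Counit. -/
def eps : H →ₗ[k] k := Coalgebra.counit
/-- Flip `a⊗b ↦ b⊗a`. -/
def tau : H ⊗[k] H →ₗ[k] H ⊗[k] H := (TensorProduct.comm k H H).toLinearMap
/-- Associator. -/
def assocMap : (H ⊗[k] H) ⊗[k] H →ₗ[k] H ⊗[k] (H ⊗[k] H) :=
  (TensorProduct.assoc k H H H).toLinearMap
/-- Inverse associator. -/
def assocInv : H ⊗[k] (H ⊗[k] H) →ₗ[k] (H ⊗[k] H) ⊗[k] H :=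
  (TensorProduct.assoc k H H H).symm.toLinearMap
/-- The middle-four interchange `(a⊗b)⊗(c⊗d) ↦ (a⊗c)⊗(b⊗d)`. -/
def ttcMap : (H ⊗[k] H) ⊗[k] (H ⊗[k] H) →ₗ[k] (H ⊗[k] H) ⊗[k] (H ⊗[k] H) :=
  (TensorProduct.tensorTensorTensorComm k H H H H).toLinearMap
/-- `a⊗b ↦ (a₁⊗b₁)⊗(a₂⊗b₂)` (Sweedler notation). -/
def dd : H ⊗[k] H →ₗ[k] (H ⊗[k] H) ⊗[k] (H ⊗[k] H) :=
  ttcMap k H ∘ₗ map (delta k H) (delta k H)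
/-- `a⊗b ↦ ((a₁⊗b₁)⊗(a₂⊗b₂))⊗(a₃⊗b₃)`. -/
def ddd : H ⊗[k] H →ₗ[k] ((H ⊗[k] H) ⊗[k] (H ⊗[k] H)) ⊗[k] (H ⊗[k] H) :=
  map (dd k H) LinearMap.id ∘ₗ dd k H
/-- `a⊗b ↦ ε(a)ε(b)`. -/
def epseps : H ⊗[k] H →ₗ[k] k := LinearMap.mul' k k ∘ₗ map (eps k H) (eps k H)
/-- `σ(a⊗b) = (a₁⇀b₁)⊗(a₂↼b₂)` attached to a pair of "actions". -/
def sig (l r : H ⊗[k] H →ₗ[k] H) : H ⊗[k] H →ₗ[k] H ⊗[k] H :=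
  map l r ∘ₗ dd k H

/-- The antipode of `H`. -/
def anti : H →ₗ[k] H := HopfAlgebra.antipode k

/-- A matched pair of actions `(H,⇀,↼)` on the Hopf algebra `H` (Definition 2.1):
`l`, `r` are a left and a right action of `H` on itself making `H` a left and right
`H`-module coalgebra, satisfying (mp.1)–(mp.4) and the braided commutativity (★). -/
structure MatchedPairOfActions (l r : H ⊗[k] H →ₗ[k] H) : Prop where
  one_act : ∀ b : H, l ((1 : H) ⊗ₜ[k] b) = b
  mul_act : ∀ a b c : H, l ((a * b) ⊗ₜ[k] c) = l (a ⊗ₜ[k] l (b ⊗ₜ[k] c))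
  act_one : ∀ a : H, r (a ⊗ₜ[k] (1 : H)) = a
  act_mul : ∀ a b c : H, r (a ⊗ₜ[k] (b * c)) = r (r (a ⊗ₜ[k] b) ⊗ₜ[k] c)
  comul_l : delta k H ∘ₗ l = map l l ∘ₗ dd k H
  counit_l : eps k H ∘ₗ l = epseps k H
  comul_r : delta k H ∘ₗ r = map r r ∘ₗ dd k H
  counit_r : eps k H ∘ₗ r = epseps k H
  mp1 : ∀ a : H, l (a ⊗ₜ[k] (1 : H)) = eps k H a • (1 : H)
  mp2 : ∀ b : H, r ((1 : H) ⊗ₜ[k] b) = eps k H b • (1 : H)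
  mp3 : l ∘ₗ map LinearMap.id (mu k H) ∘ₗ assocMap k H
      = mu k H ∘ₗ map LinearMap.id l ∘ₗ assocMap k H ∘ₗ map (sig k H l r) LinearMap.id
  mp4 : r ∘ₗ map (mu k H) LinearMap.id
      = mu k H ∘ₗ map r LinearMap.id ∘ₗ assocInv k H ∘ₗ map LinearMap.id (sig k H l r) ∘ₗ
          assocMap k H
  star : mu k H ∘ₗ sig k H l r = mu k H

/-- The second product `a·b := a₁•(T(a₂)⇀b)` attached to a left action `l = ⇀`. -/
def cdot (l : H ⊗[k] H →ₗ[k] H) : H ⊗[k] H →ₗ[k] H :=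
  mu k H ∘ₗ map LinearMap.id l ∘ₗ assocMap k H ∘ₗ
    map (map LinearMap.id (anti k H) ∘ₗ delta k H) LinearMap.id

/-- The map `S(a) := a₁⇀T(a₂)` attached to a left action `l = ⇀`. -/
def Smap (l : H ⊗[k] H →ₗ[k] H) : H →ₗ[k] H :=
  l ∘ₗ map LinearMap.id (anti k H) ∘ₗ delta k H

/-- The left adjoint action `a⇀b := a₁•b•T(a₂)`. -/
def adAct : H ⊗[k] H →ₗ[k] H :=
  mu k H ∘ₗ map (mu k H) (anti k H) ∘ₗ assocInv k H ∘ₗ map LinearMap.id (tau k H) ∘ₗ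
    assocMap k H ∘ₗ map (delta k H) LinearMap.id

/-- The trivial right action `a↼b := ε(b)a`. -/
def trivR : H ⊗[k] H →ₗ[k] H :=
  (TensorProduct.rid k H).toLinearMap ∘ₗ map LinearMap.id (eps k H)

section Aux
variable {k H : Type*} [Field k] [Ring H] [HopfAlgebra k H]

open Coalgebra LinearMap Finset

lemma eps_def : (eps k H : H →ₗ[k] k) = Coalgebra.counit := rfl
lemma delta_eq : (delta k H : H →ₗ[k] H ⊗[k] H) = Coalgebra.comul := rfl

lemma mu_tmul (a b : H) : mu k H (a ⊗ₜ[k] b) = a * b := rfl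

lemma epseps_tmul (a b : H) : epseps k H (a ⊗ₜ[k] b) = eps k H a * eps k H b := rfl

lemma trivR_tmul (a b : H) : trivR k H (a ⊗ₜ[k] b) = eps k H b • a := by
  simp [trivR]

lemma adAct_eq (a b : H) :
    adAct k H (a ⊗ₜ[k] b)
      = mu k H ((TensorProduct.map (LinearMap.mulRight k b) (anti k H)) (delta k H a)) := by
  unfold adAct
  simp only [LinearMap.coe_comp, Function.comp_apply, TensorProduct.map_tmul,
    LinearMap.id_coe, id_eq]
  generalize (delta k H) a = x
  induction x using TensorProduct.induction_on with
  | zero => simp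
  | tmul x y => simp [tau, assocMap, assocInv, mu_tmul, mul_assoc]
  | add u v hu hv => simp [TensorProduct.add_tmul, map_add, hu, hv]

end Aux
section Aux2
variable {k H : Type*} [Field k] [Ring H] [HopfAlgebra k H]

open Coalgebra LinearMap Finset

lemma delta_apply (a : H) : delta k H a = Coalgebra.comul a := rfl
lemma eps_apply (a : H) : eps k H a = Coalgebra.counit a := rfl

lemma adAct_repr {a : H} (r : Coalgebra.Repr k a (H × H)) (b : H) :
    adAct k H (a ⊗ₜ[k] b) = ∑ i ∈ r.index, r.left i * b * anti k H (r.right i) := by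
  rw [adAct_eq, delta_apply, ← r.eq, map_sum, map_sum]
  simp [mu_tmul]

/-- collapse `∑ ε(a₂) • a₁ = a` -/
lemma sum_eps_right {a : H} (r : Coalgebra.Repr k a (H × H)) :
    ∑ i ∈ r.index, eps k H (r.right i) • r.left i = a := by
  have h := Coalgebra.sum_tmul_counit_eq (R := k) r
  apply_fun (TensorProduct.rid k H) at h
  simp only [map_sum, TensorProduct.rid_tmul, one_smul] at h
  simpa only [eps_apply] using h

/-- collapse `∑ ε(a₁) • a₂ = a` -/
lemma sum_eps_left {a : H} (r : Coalgebra.Repr k a (H × H)) :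
    ∑ i ∈ r.index, eps k H (r.left i) • r.right i = a := by
  have h := Coalgebra.sum_counit_tmul_eq (R := k) r
  apply_fun (TensorProduct.lid k H) at h
  simp only [map_sum, TensorProduct.lid_tmul, one_smul] at h
  simpa only [eps_apply] using h

lemma sum_eps_eps {a : H} (r : Coalgebra.Repr k a (H × H)) :
    ∑ i ∈ r.index, eps k H (r.left i) * eps k H (r.right i) = eps k H a := by
  have h := sum_eps_left r
  apply_fun (eps k H) at h
  simpa [map_sum, smul_eq_mul] using h

lemma dd_tmul {a b : H} (ra : Coalgebra.Repr k a (H × H)) (rb : Coalgebra.Repr k b (H × H)) :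
    dd k H (a ⊗ₜ[k] b)
      = ∑ i ∈ ra.index, ∑ j ∈ rb.index,
          (ra.left i ⊗ₜ[k] rb.left j) ⊗ₜ[k] (ra.right i ⊗ₜ[k] rb.right j) := by
  unfold dd ttcMap
  simp only [LinearMap.coe_comp, Function.comp_apply, TensorProduct.map_tmul]
  rw [delta_apply, delta_apply, ← ra.eq, ← rb.eq]
  rw [TensorProduct.sum_tmul]
  rw [map_sum]
  refine Finset.sum_congr rfl fun i _ => ?_
  rw [TensorProduct.tmul_sum, map_sum]
  refine Finset.sum_congr rfl fun j _ => ?_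
  simp

end Aux2
section Conv
variable {k H : Type*} [Field k] [Ring H] [HopfAlgebra k H]
variable {C : Type*} [AddCommGroup C] [Module k C]

open Coalgebra LinearMap Finset

/-- Convolution product on `Hom(C, H)` for coalgebra data `(Δc, εc)` on `C`. -/
def conv (Dc : C →ₗ[k] C ⊗[k] C) (f g : C →ₗ[k] H) : C →ₗ[k] H :=
  mu k H ∘ₗ TensorProduct.map f g ∘ₗ Dc

/-- The convolution unit `η ∘ εc`. -/
def cunit (Ec : C →ₗ[k] k) : C →ₗ[k] H := Algebra.linearMap k H ∘ₗ Ec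

lemma mu_assoc :
    mu k H ∘ₗ TensorProduct.map (mu k H) LinearMap.id
      = mu k H ∘ₗ TensorProduct.map LinearMap.id (mu k H)
          ∘ₗ (TensorProduct.assoc k H H H).toLinearMap := by
  apply TensorProduct.ext_threefold
  intro a b c
  simp [mu_tmul, mul_assoc]

lemma assoc_natural {A B C' D E F : Type*} [AddCommGroup A] [Module k A]
    [AddCommGroup B] [Module k B] [AddCommGroup C'] [Module k C']
    [AddCommGroup D] [Module k D] [AddCommGroup E] [Module k E]
    [AddCommGroup F] [Module k F]
    (f : A →ₗ[k] D) (g : B →ₗ[k] E) (h : C' →ₗ[k] F) :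
    (TensorProduct.assoc k D E F).toLinearMap ∘ₗ
        TensorProduct.map (TensorProduct.map f g) h
      = TensorProduct.map f (TensorProduct.map g h) ∘ₗ
          (TensorProduct.assoc k A B C').toLinearMap := by
  apply TensorProduct.ext_threefold
  intro a b c
  simp

lemma conv_assoc (Dc : C →ₗ[k] C ⊗[k] C)
    (hco : (TensorProduct.assoc k C C C).toLinearMap ∘ₗ
        TensorProduct.map Dc LinearMap.id ∘ₗ Dc
      = TensorProduct.map LinearMap.id Dc ∘ₗ Dc)
    (f g h : C →ₗ[k] H) :
    conv Dc (conv Dc f g) h = conv Dc f (conv Dc g h) := by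
  unfold conv
  have e1 : TensorProduct.map (mu k H ∘ₗ TensorProduct.map f g ∘ₗ Dc) h
      = TensorProduct.map (mu k H) LinearMap.id ∘ₗ
          TensorProduct.map (TensorProduct.map f g) h ∘ₗ
            TensorProduct.map Dc LinearMap.id := by
    rw [← TensorProduct.map_comp, ← TensorProduct.map_comp]
    simp
  have e2 : TensorProduct.map f (mu k H ∘ₗ TensorProduct.map g h ∘ₗ Dc)
      = TensorProduct.map LinearMap.id (mu k H) ∘ₗ
          TensorProduct.map f (TensorProduct.map g h) ∘ₗ
            TensorProduct.map LinearMap.id Dc := by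
    rw [← TensorProduct.map_comp, ← TensorProduct.map_comp]
    simp
  rw [e1, e2]
  calc mu k H ∘ₗ (TensorProduct.map (mu k H) LinearMap.id ∘ₗ
          TensorProduct.map (TensorProduct.map f g) h ∘ₗ
            TensorProduct.map Dc LinearMap.id) ∘ₗ Dc
      = (mu k H ∘ₗ TensorProduct.map (mu k H) LinearMap.id) ∘ₗ
          TensorProduct.map (TensorProduct.map f g) h ∘ₗ
            TensorProduct.map Dc LinearMap.id ∘ₗ Dc := by
        simp only [LinearMap.comp_assoc]
    _ = mu k H ∘ₗ TensorProduct.map LinearMap.id (mu k H) ∘ₗ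
          ((TensorProduct.assoc k H H H).toLinearMap ∘ₗ
            TensorProduct.map (TensorProduct.map f g) h) ∘ₗ
            TensorProduct.map Dc LinearMap.id ∘ₗ Dc := by
        rw [mu_assoc]; simp only [LinearMap.comp_assoc]
    _ = mu k H ∘ₗ TensorProduct.map LinearMap.id (mu k H) ∘ₗ
          TensorProduct.map f (TensorProduct.map g h) ∘ₗ
            ((TensorProduct.assoc k C C C).toLinearMap ∘ₗ
              TensorProduct.map Dc LinearMap.id ∘ₗ Dc) := by
        rw [assoc_natural]; simp only [LinearMap.comp_assoc]
    _ = mu k H ∘ₗ (TensorProduct.map LinearMap.id (mu k H) ∘ₗ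
          TensorProduct.map f (TensorProduct.map g h) ∘ₗ
            TensorProduct.map LinearMap.id Dc) ∘ₗ Dc := by
        rw [hco]; simp only [LinearMap.comp_assoc]

lemma conv_unit_right (Dc : C →ₗ[k] C ⊗[k] C) (Ec : C →ₗ[k] k)
    (hcu : Ec.lTensor C ∘ₗ Dc = (TensorProduct.mk k C k).flip 1)
    (f : C →ₗ[k] H) : conv Dc f (cunit Ec) = f := by
  unfold conv cunit
  have e : TensorProduct.map f (Algebra.linearMap k H ∘ₗ Ec)
      = TensorProduct.map f (Algebra.linearMap k H) ∘ₗ Ec.lTensor C := by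
    rw [LinearMap.lTensor, ← TensorProduct.map_comp]
    simp
  rw [e, LinearMap.comp_assoc, hcu]
  ext x
  simp [mu_tmul]

lemma conv_unit_left (Dc : C →ₗ[k] C ⊗[k] C) (Ec : C →ₗ[k] k)
    (hcu : Ec.rTensor C ∘ₗ Dc = TensorProduct.mk k k C 1)
    (g : C →ₗ[k] H) : conv Dc (cunit Ec) g = g := by
  unfold conv cunit
  have e : TensorProduct.map (Algebra.linearMap k H ∘ₗ Ec) g
      = TensorProduct.map (Algebra.linearMap k H) g ∘ₗ Ec.rTensor C := by
    rw [LinearMap.rTensor, ← TensorProduct.map_comp]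
    simp
  rw [e, LinearMap.comp_assoc, hcu]
  ext x
  simp [mu_tmul]

lemma conv_inv_unique (Dc : C →ₗ[k] C ⊗[k] C) (Ec : C →ₗ[k] k)
    (hco : (TensorProduct.assoc k C C C).toLinearMap ∘ₗ
        TensorProduct.map Dc LinearMap.id ∘ₗ Dc
      = TensorProduct.map LinearMap.id Dc ∘ₗ Dc)
    (hcul : Ec.rTensor C ∘ₗ Dc = TensorProduct.mk k k C 1)
    (hcur : Ec.lTensor C ∘ₗ Dc = (TensorProduct.mk k C k).flip 1)
    (f m g : C →ₗ[k] H) (h1 : conv Dc f m = cunit Ec) (h2 : conv Dc m g = cunit Ec) :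
    f = g := by
  have := conv_assoc Dc hco f m g
  rw [h1, h2, conv_unit_right Dc Ec hcur f, conv_unit_left Dc Ec hcul g] at this
  exact this.symm

end Conv
section CoalgH
variable {k H : Type*} [Field k] [Ring H] [HopfAlgebra k H]

open Coalgebra LinearMap Finset

lemma map_id_eq_lTensor {M N P : Type*} [AddCommGroup M] [Module k M]
    [AddCommGroup N] [Module k N] [AddCommGroup P] [Module k P] (f : N →ₗ[k] P) :
    TensorProduct.map (LinearMap.id : M →ₗ[k] M) f = f.lTensor M := rfl

lemma map_id_eq_rTensor {M N P : Type*} [AddCommGroup M] [Module k M]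
    [AddCommGroup N] [Module k N] [AddCommGroup P] [Module k P] (f : N →ₗ[k] P) :
    TensorProduct.map f (LinearMap.id : M →ₗ[k] M) = f.rTensor M := rfl

lemma hcoH : (TensorProduct.assoc k H H H).toLinearMap ∘ₗ
    TensorProduct.map (delta k H) LinearMap.id ∘ₗ delta k H
    = TensorProduct.map LinearMap.id (delta k H) ∘ₗ delta k H := by
  rw [map_id_eq_lTensor, map_id_eq_rTensor]
  exact Coalgebra.coassoc

lemma hculH : (eps k H).rTensor H ∘ₗ delta k H = TensorProduct.mk k k H 1 :=
  Coalgebra.rTensor_counit_comp_comul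

lemma hcurH : (eps k H).lTensor H ∘ₗ delta k H = (TensorProduct.mk k H k).flip 1 :=
  Coalgebra.lTensor_counit_comp_comul

lemma conv_apply_repr {f g : H →ₗ[k] H} {a : H} (r : Coalgebra.Repr k a (H × H)) :
    conv (delta k H) f g a = ∑ i ∈ r.index, f (r.left i) * g (r.right i) := by
  unfold conv
  simp only [LinearMap.coe_comp, Function.comp_apply]
  rw [delta_apply, ← r.eq, map_sum, map_sum]
  simp [mu_tmul]

end CoalgH
section DDCoalg
set_option maxHeartbeats 1000000
set_option synthInstance.maxHeartbeats 400000
variable {k H : Type*} [Field k] [Ring H] [HopfAlgebra k H]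

open Coalgebra LinearMap Finset

lemma dd_apply (a b : H) :
    dd k H (a ⊗ₜ[k] b) = ttcMap k H (delta k H a ⊗ₜ[k] delta k H b) := by
  simp [dd]

lemma L2dd : (epseps k H).rTensor (H ⊗[k] H) ∘ₗ dd k H
    = TensorProduct.mk k k (H ⊗[k] H) 1 := by
  have key : (epseps k H).rTensor (H ⊗[k] H) ∘ₗ ttcMap k H
      = (TensorProduct.map (LinearMap.mul' k k) LinearMap.id
          ∘ₗ (TensorProduct.tensorTensorTensorComm k k H k H).toLinearMap)
        ∘ₗ TensorProduct.map ((eps k H).rTensor H) ((eps k H).rTensor H) := by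
    apply TensorProduct.ext_fourfold'
    intro x x' y y'
    simp [ttcMap, epseps_tmul, mu_tmul]
  apply TensorProduct.ext'
  intro a b
  have : (epseps k H).rTensor (H ⊗[k] H) (dd k H (a ⊗ₜ[k] b))
      = (TensorProduct.map (LinearMap.mul' k k) LinearMap.id
          ∘ₗ (TensorProduct.tensorTensorTensorComm k k H k H).toLinearMap)
          (((eps k H).rTensor H (delta k H a)) ⊗ₜ[k] ((eps k H).rTensor H (delta k H b))) := by
    rw [dd_apply, ← LinearMap.comp_apply, key]
    simp
  simp only [LinearMap.coe_comp, Function.comp_apply, TensorProduct.mk_apply]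
  rw [this, delta_apply, delta_apply, eps_def,
    Coalgebra.rTensor_counit_comul, Coalgebra.rTensor_counit_comul]
  simp [mu_tmul]

lemma L3dd : (epseps k H).lTensor (H ⊗[k] H) ∘ₗ dd k H
    = (TensorProduct.mk k (H ⊗[k] H) k).flip 1 := by
  have key : (epseps k H).lTensor (H ⊗[k] H) ∘ₗ ttcMap k H
      = (TensorProduct.map LinearMap.id (LinearMap.mul' k k)
          ∘ₗ (TensorProduct.tensorTensorTensorComm k H k H k).toLinearMap)
        ∘ₗ TensorProduct.map ((eps k H).lTensor H) ((eps k H).lTensor H) := by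
    apply TensorProduct.ext_fourfold'
    intro x x' y y'
    simp [ttcMap, epseps_tmul, mu_tmul]
  apply TensorProduct.ext'
  intro a b
  have : (epseps k H).lTensor (H ⊗[k] H) (dd k H (a ⊗ₜ[k] b))
      = (TensorProduct.map LinearMap.id (LinearMap.mul' k k)
          ∘ₗ (TensorProduct.tensorTensorTensorComm k H k H k).toLinearMap)
          (((eps k H).lTensor H (delta k H a)) ⊗ₜ[k] ((eps k H).lTensor H (delta k H b))) := by
    rw [dd_apply, ← LinearMap.comp_apply, key]
    simp
  simp only [LinearMap.coe_comp, Function.comp_apply, LinearMap.flip_apply,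
    TensorProduct.mk_apply]
  rw [this, delta_apply, delta_apply, eps_def,
    Coalgebra.lTensor_counit_comul, Coalgebra.lTensor_counit_comul]
  simp [mu_tmul]

/-- The regrouping `(x₁⊗(x₂⊗x₃))⊗(y₁⊗(y₂⊗y₃)) ↦ (x₁⊗y₁)⊗((x₂⊗y₂)⊗(x₃⊗y₃))`. -/
def phiMap : (H ⊗[k] (H ⊗[k] H)) ⊗[k] (H ⊗[k] (H ⊗[k] H)) →ₗ[k]
    (H ⊗[k] H) ⊗[k] ((H ⊗[k] H) ⊗[k] (H ⊗[k] H)) :=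
  (ttcMap k H).lTensor (H ⊗[k] H)
    ∘ₗ (TensorProduct.tensorTensorTensorComm k H (H ⊗[k] H) H (H ⊗[k] H)).toLinearMap

lemma L1dd : (TensorProduct.assoc k (H ⊗[k] H) (H ⊗[k] H) (H ⊗[k] H)).toLinearMap
      ∘ₗ TensorProduct.map (dd k H) LinearMap.id ∘ₗ dd k H
    = TensorProduct.map LinearMap.id (dd k H) ∘ₗ dd k H := by
  have ML1 : (TensorProduct.assoc k (H ⊗[k] H) (H ⊗[k] H) (H ⊗[k] H)).toLinearMap
        ∘ₗ TensorProduct.map (dd k H) LinearMap.id ∘ₗ ttcMap k H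
      = phiMap ∘ₗ TensorProduct.map
          ((TensorProduct.assoc k H H H).toLinearMap ∘ₗ (delta k H).rTensor H)
          ((TensorProduct.assoc k H H H).toLinearMap ∘ₗ (delta k H).rTensor H) := by
    apply TensorProduct.ext_fourfold'
    intro x x' y y'
    simp only [LinearMap.coe_comp, Function.comp_apply, TensorProduct.map_tmul,
      LinearMap.id_coe, id_eq, ttcMap, LinearEquiv.coe_coe,
      TensorProduct.tensorTensorTensorComm_tmul, LinearMap.rTensor_tmul, dd_apply]
    generalize delta k H x = u
    generalize delta k H y = v
    induction u using TensorProduct.induction_on with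
    | zero => simp only [TensorProduct.zero_tmul, TensorProduct.tmul_zero, map_zero]
    | tmul p p' =>
        induction v using TensorProduct.induction_on with
        | zero => simp only [TensorProduct.zero_tmul, TensorProduct.tmul_zero, map_zero]
        | tmul q q' =>
            simp only [phiMap, ttcMap, LinearMap.coe_comp, Function.comp_apply,
              LinearEquiv.coe_coe, TensorProduct.tensorTensorTensorComm_tmul,
              TensorProduct.assoc_tmul, TensorProduct.map_tmul, LinearMap.lTensor_tmul,
              LinearMap.id_coe, id_eq]
        | add s t hs ht =>
            simp only [TensorProduct.tmul_add, TensorProduct.add_tmul, map_add] at *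
            rw [hs, ht]
    | add s t hs ht =>
        simp only [TensorProduct.tmul_add, TensorProduct.add_tmul, map_add] at *
        rw [hs, ht]
  have ML2 : TensorProduct.map LinearMap.id (dd k H) ∘ₗ ttcMap k H
      = phiMap ∘ₗ TensorProduct.map ((delta k H).lTensor H) ((delta k H).lTensor H) := by
    apply TensorProduct.ext_fourfold'
    intro x x' y y'
    simp only [LinearMap.coe_comp, Function.comp_apply, TensorProduct.map_tmul,
      LinearMap.id_coe, id_eq, ttcMap, LinearEquiv.coe_coe,
      TensorProduct.tensorTensorTensorComm_tmul, LinearMap.lTensor_tmul, dd_apply]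
    generalize delta k H x' = u
    generalize delta k H y' = v
    induction u using TensorProduct.induction_on with
    | zero => simp only [TensorProduct.zero_tmul, TensorProduct.tmul_zero, map_zero]
    | tmul p p' =>
        induction v using TensorProduct.induction_on with
        | zero => simp only [TensorProduct.zero_tmul, TensorProduct.tmul_zero, map_zero]
        | tmul q q' =>
            simp only [phiMap, ttcMap, LinearMap.coe_comp, Function.comp_apply,
              LinearEquiv.coe_coe, TensorProduct.tensorTensorTensorComm_tmul,
              TensorProduct.assoc_tmul, TensorProduct.map_tmul, LinearMap.lTensor_tmul,
              LinearMap.id_coe, id_eq]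
        | add s t hs ht =>
            simp only [TensorProduct.tmul_add, TensorProduct.add_tmul, map_add] at *
            rw [hs, ht]
    | add s t hs ht =>
        simp only [TensorProduct.tmul_add, TensorProduct.add_tmul, map_add] at *
        rw [hs, ht]
  apply TensorProduct.ext'
  intro a b
  have lhs : (TensorProduct.assoc k (H ⊗[k] H) (H ⊗[k] H) (H ⊗[k] H)).toLinearMap
      (TensorProduct.map (dd k H) LinearMap.id (dd k H (a ⊗ₜ[k] b)))
      = phiMap
          (((TensorProduct.assoc k H H H).toLinearMap ((delta k H).rTensor H (delta k H a)))
            ⊗ₜ[k]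
           ((TensorProduct.assoc k H H H).toLinearMap ((delta k H).rTensor H (delta k H b)))) := by
    rw [dd_apply]
    have := congr($(ML1) (delta k H a ⊗ₜ[k] delta k H b))
    simpa using this
  have rhs : TensorProduct.map LinearMap.id (dd k H) (dd k H (a ⊗ₜ[k] b))
      = phiMap
          (((delta k H).lTensor H (delta k H a)) ⊗ₜ[k]
           ((delta k H).lTensor H (delta k H b))) := by
    rw [dd_apply]
    have := congr($(ML2) (delta k H a ⊗ₜ[k] delta k H b))
    simpa using this
  simp only [LinearMap.coe_comp, Function.comp_apply]
  rw [lhs, rhs]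
  rw [delta_eq]
  simp only [LinearEquiv.coe_coe]
  rw [Coalgebra.coassoc_apply, Coalgebra.coassoc_apply]

end DDCoalg
section Antipode
variable {k H : Type*} [Field k] [Ring H] [HopfAlgebra k H]

open Coalgebra LinearMap Finset

set_option maxHeartbeats 1000000
set_option synthInstance.maxHeartbeats 400000

lemma anti_def : (anti k H : H →ₗ[k] H) = HopfAlgebra.antipode k := rfl

lemma antipode_one : anti k H (1 : H) = 1 := by
  have h := HopfAlgebra.mul_antipode_rTensor_comul_apply (R := k) (A := H) (1 : H)
  rw [Bialgebra.comul_one, Bialgebra.counit_one, Algebra.TensorProduct.one_def] at h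
  simp [anti_def]

lemma conv_dd_tmul (f g : H ⊗[k] H →ₗ[k] H) {a b : H}
    (ra : Coalgebra.Repr k a (H × H)) (rb : Coalgebra.Repr k b (H × H)) :
    conv (dd k H) f g (a ⊗ₜ[k] b)
      = ∑ i ∈ ra.index, ∑ j ∈ rb.index,
          f (ra.left i ⊗ₜ[k] rb.left j) * g (ra.right i ⊗ₜ[k] rb.right j) := by
  unfold conv
  simp only [LinearMap.coe_comp, Function.comp_apply]
  rw [dd_tmul ra rb, map_sum, map_sum]
  refine Finset.sum_congr rfl fun i _ => ?_
  rw [map_sum, map_sum]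
  refine Finset.sum_congr rfl fun j _ => ?_
  simp [mu_tmul]

lemma cunit_tmul (a b : H) :
    (cunit (epseps k H) : H ⊗[k] H →ₗ[k] H) (a ⊗ₜ[k] b)
      = algebraMap k H (eps k H a * eps k H b) := by
  simp [cunit, epseps_tmul]

lemma conv_F_m :
    conv (dd k H) (mu k H ∘ₗ TensorProduct.map (anti k H) (anti k H) ∘ₗ tau k H) (mu k H)
      = cunit (epseps k H) := by
  apply TensorProduct.ext'
  intro a b
  obtain ⟨ra, rb⟩ : Coalgebra.Repr k a (H × H) × Coalgebra.Repr k b (H × H) := ⟨ℛ k a, ℛ k b⟩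
  rw [conv_dd_tmul _ _ ra rb, cunit_tmul]
  have term : ∀ i ∈ ra.index, ∀ j ∈ rb.index,
      (mu k H ∘ₗ TensorProduct.map (anti k H) (anti k H) ∘ₗ tau k H)
          (ra.left i ⊗ₜ[k] rb.left j) * mu k H (ra.right i ⊗ₜ[k] rb.right j)
      = anti k H (rb.left j) *
          ((anti k H (ra.left i) * ra.right i) * rb.right j) := by
    intro i _ j _
    simp only [LinearMap.coe_comp, Function.comp_apply, tau, LinearEquiv.coe_coe,
      TensorProduct.comm_tmul, TensorProduct.map_tmul, mu_tmul]
    rw [mul_assoc, ← mul_assoc (anti k H (ra.left i))]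
  calc ∑ i ∈ ra.index, ∑ j ∈ rb.index,
        (mu k H ∘ₗ TensorProduct.map (anti k H) (anti k H) ∘ₗ tau k H)
          (ra.left i ⊗ₜ[k] rb.left j) * mu k H (ra.right i ⊗ₜ[k] rb.right j)
      = ∑ j ∈ rb.index, ∑ i ∈ ra.index, anti k H (rb.left j) *
          ((anti k H (ra.left i) * ra.right i) * rb.right j) := by
        rw [Finset.sum_comm]
        exact Finset.sum_congr rfl fun j hj => Finset.sum_congr rfl fun i hi =>
          term i hi j hj
    _ = ∑ j ∈ rb.index, anti k H (rb.left j) *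
          ((∑ i ∈ ra.index, anti k H (ra.left i) * ra.right i) * rb.right j) := by
        refine Finset.sum_congr rfl fun j _ => ?_
        rw [Finset.sum_mul, Finset.mul_sum]
    _ = algebraMap k H (eps k H a * eps k H b) := by
        rw [show ∑ i ∈ ra.index, anti k H (ra.left i) * ra.right i
            = algebraMap k H (Coalgebra.counit a) from HopfAlgebra.sum_antipode_mul_eq_algebraMap_counit ra]
        have : ∀ j ∈ rb.index, anti k H (rb.left j) *
            (algebraMap k H (Coalgebra.counit a) * rb.right j)
            = algebraMap k H (Coalgebra.counit a) * (anti k H (rb.left j) * rb.right j) := by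
          intro j _
          rw [← mul_assoc, ← Algebra.commutes, mul_assoc]
        rw [Finset.sum_congr rfl this, ← Finset.mul_sum,
          show ∑ j ∈ rb.index, anti k H (rb.left j) * rb.right j
            = algebraMap k H (Coalgebra.counit b) from HopfAlgebra.sum_antipode_mul_eq_algebraMap_counit rb,
          ← map_mul]
        rfl

lemma conv_m_G :
    conv (dd k H) (mu k H) (anti k H ∘ₗ mu k H) = cunit (epseps k H) := by
  apply TensorProduct.ext'
  intro a b
  obtain ⟨ra, rb⟩ : Coalgebra.Repr k a (H × H) × Coalgebra.Repr k b (H × H) := ⟨ℛ k a, ℛ k b⟩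
  rw [conv_dd_tmul _ _ ra rb, cunit_tmul]
  have key : Coalgebra.comul (R := k) (a * b)
      = ∑ i ∈ ra.index, ∑ j ∈ rb.index,
          (ra.left i * rb.left j) ⊗ₜ[k] (ra.right i * rb.right j) := by
    rw [Bialgebra.comul_mul, ← ra.eq, ← rb.eq, Finset.sum_mul_sum]
    exact Finset.sum_congr rfl fun i _ => Finset.sum_congr rfl fun j _ => by
      rw [Algebra.TensorProduct.tmul_mul_tmul]
  have h := HopfAlgebra.mul_antipode_lTensor_comul_apply (R := k) (A := H) (a * b)
  rw [key, map_sum, map_sum, Bialgebra.counit_mul] at h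
  calc ∑ i ∈ ra.index, ∑ j ∈ rb.index,
        mu k H (ra.left i ⊗ₜ[k] rb.left j) *
          (anti k H ∘ₗ mu k H) (ra.right i ⊗ₜ[k] rb.right j)
      = ∑ i ∈ ra.index, ∑ j ∈ rb.index, LinearMap.mul' k H
          ((HopfAlgebra.antipode (R := k)).lTensor H
            ((ra.left i * rb.left j) ⊗ₜ[k] (ra.right i * rb.right j))) := by
        refine Finset.sum_congr rfl fun i _ => Finset.sum_congr rfl fun j _ => ?_
        simp [mu_tmul, anti_def]
    _ = algebraMap k H (eps k H a * eps k H b) := by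
        simp only [map_sum] at h
        rw [eps_apply, eps_apply]
        exact h

lemma antipode_mul (a b : H) : anti k H (a * b) = anti k H b * anti k H a := by
  have h := conv_inv_unique (dd k H) (epseps k H) L1dd L2dd L3dd
    (mu k H ∘ₗ TensorProduct.map (anti k H) (anti k H) ∘ₗ tau k H) (mu k H)
    (anti k H ∘ₗ mu k H) conv_F_m conv_m_G
  have := congr($(h) (a ⊗ₜ[k] b))
  simpa [tau, mu_tmul] using this.symm

end Antipode
section ConvH
variable {k H : Type*} [Field k] [Ring H] [HopfAlgebra k H]

open Coalgebra LinearMap Finset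

set_option maxHeartbeats 1000000
set_option synthInstance.maxHeartbeats 400000

/-- `a ↦ a⇀b`. -/
def Lb (b : H) : H →ₗ[k] H := adAct k H ∘ₗ (TensorProduct.mk k H H).flip b

lemma Lb_apply (a b : H) : (Lb b : H →ₗ[k] H) a = adAct k H (a ⊗ₜ[k] b) := rfl

lemma Lb_eq_conv (b : H) :
    (Lb b : H →ₗ[k] H) = conv (delta k H) (LinearMap.mulRight k b) (anti k H) := by
  apply LinearMap.ext
  intro a
  rw [Lb_apply, conv_apply_repr (ℛ k a), adAct_repr (ℛ k a)]
  exact Finset.sum_congr rfl fun i _ => by rw [LinearMap.mulRight_apply]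

lemma conv_T_id : conv (delta k H) (anti k H) LinearMap.id = cunit (eps k H) := by
  apply LinearMap.ext
  intro a
  rw [conv_apply_repr (ℛ k a)]
  simp only [LinearMap.id_coe, id_eq, anti_def]
  rw [HopfAlgebra.sum_antipode_mul_eq_algebraMap_counit (ℛ k a)]
  rfl

lemma conv_T_rho (c : H) :
    conv (delta k H) (anti k H) (LinearMap.mulRight k c)
      = LinearMap.smulRight (eps k H) c := by
  apply LinearMap.ext
  intro a
  rw [conv_apply_repr (ℛ k a)]
  simp only [LinearMap.mulRight_apply, LinearMap.smulRight_apply]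
  calc ∑ i ∈ (ℛ k a).index, anti k H ((ℛ k a).left i) * ((ℛ k a).right i * c)
      = (∑ i ∈ (ℛ k a).index, anti k H ((ℛ k a).left i) * (ℛ k a).right i) * c := by
        rw [Finset.sum_mul]
        exact Finset.sum_congr rfl fun i _ => by rw [mul_assoc]
    _ = eps k H a • c := by
        simp only [anti_def]
        rw [HopfAlgebra.sum_antipode_mul_eq_algebraMap_counit (ℛ k a), eps_apply, Algebra.smul_def]

lemma conv_K_T (c : H) :
    conv (delta k H) (LinearMap.smulRight (eps k H) c) (anti k H)
      = LinearMap.mulLeft k c ∘ₗ anti k H := by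
  apply LinearMap.ext
  intro a
  rw [conv_apply_repr (ℛ k a)]
  simp only [LinearMap.smulRight_apply, LinearMap.coe_comp, Function.comp_apply,
    LinearMap.mulLeft_apply]
  calc ∑ i ∈ (ℛ k a).index, (eps k H ((ℛ k a).left i) • c) * anti k H ((ℛ k a).right i)
      = ∑ i ∈ (ℛ k a).index, c * anti k H (eps k H ((ℛ k a).left i) • (ℛ k a).right i) := by
        refine Finset.sum_congr rfl fun i _ => ?_
        rw [smul_mul_assoc, map_smul, mul_smul_comm]
    _ = c * anti k H a := by
        rw [← Finset.mul_sum, ← map_sum, sum_eps_left (ℛ k a)]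

lemma conv_rho_cT (b c : H) :
    conv (delta k H) (LinearMap.mulRight k b) (LinearMap.mulLeft k c ∘ₗ anti k H)
      = (Lb (b * c) : H →ₗ[k] H) := by
  apply LinearMap.ext
  intro a
  rw [conv_apply_repr (ℛ k a), Lb_apply, adAct_repr (ℛ k a)]
  refine Finset.sum_congr rfl fun i _ => ?_
  simp only [LinearMap.mulRight_apply, LinearMap.coe_comp, Function.comp_apply,
    LinearMap.mulLeft_apply]
  rw [mul_assoc, mul_assoc, ← mul_assoc b c]

lemma conv_Lb_Lc (b c : H) :
    conv (delta k H) (Lb b) (Lb c) = (Lb (b * c) : H →ₗ[k] H) := by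
  rw [Lb_eq_conv b, Lb_eq_conv c]
  rw [conv_assoc (delta k H) hcoH]
  rw [← conv_assoc (delta k H) hcoH (anti k H)]
  rw [conv_T_rho, conv_K_T, conv_rho_cT]

lemma conv_Lb_id (b : H) :
    conv (delta k H) (Lb b) LinearMap.id = LinearMap.mulRight k b := by
  rw [Lb_eq_conv b, conv_assoc (delta k H) hcoH, conv_T_id,
    conv_unit_right (delta k H) (eps k H) hcurH]

lemma sig_tmul {a : H} (ra : Coalgebra.Repr k a (H × H)) (b : H) :
    sig k H (adAct k H) (trivR k H) (a ⊗ₜ[k] b)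
      = ∑ i ∈ ra.index, adAct k H (ra.left i ⊗ₜ[k] b) ⊗ₜ[k] ra.right i := by
  unfold sig
  simp only [LinearMap.coe_comp, Function.comp_apply]
  rw [dd_tmul ra (ℛ k b), map_sum]
  refine Finset.sum_congr rfl fun i _ => ?_
  rw [map_sum]
  calc ∑ j ∈ (ℛ k b).index, TensorProduct.map (adAct k H) (trivR k H)
        ((ra.left i ⊗ₜ[k] (ℛ k b).left j) ⊗ₜ[k] (ra.right i ⊗ₜ[k] (ℛ k b).right j))
      = ∑ j ∈ (ℛ k b).index,
          adAct k H (ra.left i ⊗ₜ[k] (eps k H ((ℛ k b).right j) • (ℛ k b).left j))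
            ⊗ₜ[k] ra.right i := by
        refine Finset.sum_congr rfl fun j _ => ?_
        simp only [TensorProduct.map_tmul, trivR_tmul, TensorProduct.tmul_smul,
          map_smul, TensorProduct.smul_tmul']
        congr 1
        rw [← map_smul, TensorProduct.smul_tmul']
    _ = adAct k H (ra.left i ⊗ₜ[k] b) ⊗ₜ[k] ra.right i := by
        rw [← TensorProduct.sum_tmul, ← map_sum, ← TensorProduct.tmul_sum,
          sum_eps_right (ℛ k b)]

end ConvH
section Fields
variable {k H : Type*} [Field k] [Ring H] [HopfAlgebra k H]

open Coalgebra LinearMap Finset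

set_option maxHeartbeats 1000000
set_option synthInstance.maxHeartbeats 400000

lemma comul_mul_repr {a b : H} (ra : Coalgebra.Repr k a (H × H)) (rb : Coalgebra.Repr k b (H × H)) :
    delta k H (a * b)
      = ∑ i ∈ ra.index, ∑ j ∈ rb.index,
          (ra.left i * rb.left j) ⊗ₜ[k] (ra.right i * rb.right j) := by
  rw [delta_apply, Bialgebra.comul_mul, ← ra.eq, ← rb.eq, Finset.sum_mul_sum]
  exact Finset.sum_congr rfl fun i _ => Finset.sum_congr rfl fun j _ => by
    rw [Algebra.TensorProduct.tmul_mul_tmul]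

lemma counit_anti (x : H) : eps k H (anti k H x) = eps k H x := by
  have h1 := HopfAlgebra.sum_antipode_mul_eq_algebraMap_counit (R := k) (ℛ k x)
  apply_fun (eps k H) at h1
  rw [map_sum] at h1
  have h2 : ∑ i ∈ (ℛ k x).index,
      eps k H (HopfAlgebra.antipode (R := k) ((ℛ k x).left i) * (ℛ k x).right i)
      = eps k H (anti k H x) := by
    have : ∀ i ∈ (ℛ k x).index,
        eps k H (HopfAlgebra.antipode (R := k) ((ℛ k x).left i) * (ℛ k x).right i)
        = eps k H ((ℛ k x).right i) * eps k H (anti k H ((ℛ k x).left i)) := by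
      intro i _
      rw [eps_apply, Bialgebra.counit_mul, mul_comm]
      rfl
    rw [Finset.sum_congr rfl this]
    calc ∑ i ∈ (ℛ k x).index,
          eps k H ((ℛ k x).right i) * eps k H (anti k H ((ℛ k x).left i))
        = eps k H (anti k H (∑ i ∈ (ℛ k x).index,
            eps k H ((ℛ k x).right i) • (ℛ k x).left i)) := by
          rw [map_sum, map_sum]
          exact (Finset.sum_congr rfl fun i _ => by
            rw [map_smul, map_smul, smul_eq_mul]).symm
      _ = eps k H (anti k H x) := by rw [sum_eps_right (ℛ k x)]
  rw [h2] at h1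
  rw [h1, eps_apply, Bialgebra.counit_algebraMap, eps_apply]

lemma eps_adAct (a b : H) :
    eps k H (adAct k H (a ⊗ₜ[k] b)) = eps k H a * eps k H b := by
  rw [adAct_repr (ℛ k a), map_sum]
  have : ∀ i ∈ (ℛ k a).index,
      eps k H ((ℛ k a).left i * b * anti k H ((ℛ k a).right i))
      = (eps k H ((ℛ k a).left i) * eps k H ((ℛ k a).right i)) * eps k H b := by
    intro i _
    rw [eps_apply, Bialgebra.counit_mul, Bialgebra.counit_mul, ← eps_apply, ← eps_apply,
      ← eps_apply, counit_anti, mul_right_comm]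
  rw [Finset.sum_congr rfl this, ← Finset.sum_mul, sum_eps_eps (ℛ k a)]

lemma field_one_act (b : H) : adAct k H ((1 : H) ⊗ₜ[k] b) = b := by
  rw [adAct_eq, delta_apply, Bialgebra.comul_one, Algebra.TensorProduct.one_def]
  simp [mu_tmul, antipode_one]

lemma field_mul_act (a b c : H) :
    adAct k H ((a * b) ⊗ₜ[k] c) = adAct k H (a ⊗ₜ[k] adAct k H (b ⊗ₜ[k] c)) := by
  rw [adAct_eq, comul_mul_repr (ℛ k a) (ℛ k b)]
  simp only [map_sum]
  rw [adAct_repr (ℛ k a), adAct_repr (ℛ k b)]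
  calc ∑ i ∈ (ℛ k a).index, ∑ j ∈ (ℛ k b).index,
        mu k H ((TensorProduct.map (LinearMap.mulRight k c) (anti k H))
          (((ℛ k a).left i * (ℛ k b).left j) ⊗ₜ[k] ((ℛ k a).right i * (ℛ k b).right j)))
      = ∑ i ∈ (ℛ k a).index, ∑ j ∈ (ℛ k b).index,
          (ℛ k a).left i * ((ℛ k b).left j * c * anti k H ((ℛ k b).right j))
            * anti k H ((ℛ k a).right i) := by
        refine Finset.sum_congr rfl fun i _ => Finset.sum_congr rfl fun j _ => ?_
        simp only [TensorProduct.map_tmul, LinearMap.mulRight_apply, mu_tmul]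
        rw [antipode_mul]
        simp only [mul_assoc]
    _ = ∑ i ∈ (ℛ k a).index, (ℛ k a).left i *
          (∑ j ∈ (ℛ k b).index, (ℛ k b).left j * c * anti k H ((ℛ k b).right j))
            * anti k H ((ℛ k a).right i) := by
        refine Finset.sum_congr rfl fun i _ => ?_
        rw [Finset.mul_sum, Finset.sum_mul]

lemma field_comul_r :
    delta k H ∘ₗ trivR k H = TensorProduct.map (trivR k H) (trivR k H) ∘ₗ dd k H := by
  apply TensorProduct.ext'
  intro a b
  simp only [LinearMap.coe_comp, Function.comp_apply]
  rw [trivR_tmul, map_smul, dd_tmul (ℛ k a) (ℛ k b), map_sum]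
  rw [delta_apply, ← (ℛ k a).eq, Finset.smul_sum]
  refine (Finset.sum_congr rfl fun i _ => ?_).symm
  rw [map_sum]
  calc ∑ j ∈ (ℛ k b).index, TensorProduct.map (trivR k H) (trivR k H)
        (((ℛ k a).left i ⊗ₜ[k] (ℛ k b).left j) ⊗ₜ[k] ((ℛ k a).right i ⊗ₜ[k] (ℛ k b).right j))
      = ∑ j ∈ (ℛ k b).index, (eps k H ((ℛ k b).left j) * eps k H ((ℛ k b).right j)) •
          ((ℛ k a).left i ⊗ₜ[k] (ℛ k a).right i) := by
        refine Finset.sum_congr rfl fun j _ => ?_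
        simp only [TensorProduct.map_tmul, trivR_tmul, TensorProduct.smul_tmul',
          TensorProduct.tmul_smul, smul_smul]
        rw [mul_comm]
    _ = eps k H b • ((ℛ k a).left i ⊗ₜ[k] (ℛ k a).right i) := by
        rw [← Finset.sum_smul, sum_eps_eps (ℛ k b)]

lemma field_counit_l : eps k H ∘ₗ adAct k H = epseps k H := by
  apply TensorProduct.ext'
  intro a b
  simp only [LinearMap.coe_comp, Function.comp_apply, epseps_tmul]
  exact eps_adAct a b

lemma field_counit_r : eps k H ∘ₗ trivR k H = epseps k H := by
  apply TensorProduct.ext'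
  intro a b
  simp only [LinearMap.coe_comp, Function.comp_apply, epseps_tmul]
  rw [trivR_tmul, map_smul, smul_eq_mul, mul_comm]

lemma field_mp1 (a : H) : adAct k H (a ⊗ₜ[k] (1 : H)) = eps k H a • (1 : H) := by
  rw [adAct_repr (ℛ k a)]
  have : ∀ i ∈ (ℛ k a).index,
      (ℛ k a).left i * 1 * anti k H ((ℛ k a).right i)
      = (ℛ k a).left i * anti k H ((ℛ k a).right i) := by
    intro i _; rw [mul_one]
  rw [Finset.sum_congr rfl this]
  simp only [anti_def]
  rw [HopfAlgebra.sum_mul_antipode_eq_smul (ℛ k a)]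
  rfl

lemma field_mp3 :
    adAct k H ∘ₗ TensorProduct.map LinearMap.id (mu k H) ∘ₗ assocMap k H
      = mu k H ∘ₗ TensorProduct.map LinearMap.id (adAct k H) ∘ₗ assocMap k H ∘ₗ
          TensorProduct.map (sig k H (adAct k H) (trivR k H)) LinearMap.id := by
  apply TensorProduct.ext_threefold
  intro a b c
  simp only [LinearMap.coe_comp, Function.comp_apply, assocMap, LinearEquiv.coe_coe,
    TensorProduct.assoc_tmul, TensorProduct.map_tmul, LinearMap.id_coe, id_eq, mu_tmul]
  rw [sig_tmul (ℛ k a) b, TensorProduct.sum_tmul]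
  simp only [map_sum]
  have key : adAct k H (a ⊗ₜ[k] (b * c))
      = ∑ i ∈ (ℛ k a).index,
          adAct k H ((ℛ k a).left i ⊗ₜ[k] b) * adAct k H ((ℛ k a).right i ⊗ₜ[k] c) := by
    rw [show adAct k H (a ⊗ₜ[k] (b * c)) = (Lb (b * c) : H →ₗ[k] H) a from rfl,
      ← conv_Lb_Lc, conv_apply_repr (ℛ k a)]
    exact Finset.sum_congr rfl fun i _ => rfl
  rw [key]
  refine Finset.sum_congr rfl fun i _ => ?_
  simp only [LinearEquiv.coe_coe, TensorProduct.assoc_tmul, TensorProduct.map_tmul,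
    LinearMap.id_coe, id_eq, mu_tmul]

lemma field_mp4 :
    trivR k H ∘ₗ TensorProduct.map (mu k H) LinearMap.id
      = mu k H ∘ₗ TensorProduct.map (trivR k H) LinearMap.id ∘ₗ assocInv k H ∘ₗ
          TensorProduct.map LinearMap.id (sig k H (adAct k H) (trivR k H)) ∘ₗ
            assocMap k H := by
  apply TensorProduct.ext_threefold
  intro a b c
  simp only [LinearMap.coe_comp, Function.comp_apply, assocMap, assocInv,
    LinearEquiv.coe_coe, TensorProduct.assoc_tmul, TensorProduct.map_tmul,
    LinearMap.id_coe, id_eq, mu_tmul]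
  rw [trivR_tmul, sig_tmul (ℛ k b) c, TensorProduct.tmul_sum]
  simp only [map_sum]
  symm
  calc (∑ j ∈ (ℛ k b).index, mu k H
        ((TensorProduct.map (trivR k H) LinearMap.id)
          ((TensorProduct.assoc k H H H).symm
            (a ⊗ₜ[k] (adAct k H ((ℛ k b).left j ⊗ₜ[k] c) ⊗ₜ[k] (ℛ k b).right j)))))
      = ∑ j ∈ (ℛ k b).index, eps k H c •
          (eps k H ((ℛ k b).left j) • (a * (ℛ k b).right j)) := by
        refine Finset.sum_congr rfl fun j _ => ?_
        simp only [TensorProduct.assoc_symm_tmul, TensorProduct.map_tmul, trivR_tmul,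
          LinearMap.id_coe, id_eq, mu_tmul, eps_adAct]
        rw [mul_comm (eps k H ((ℛ k b).left j)), mul_smul, smul_mul_assoc]
        rw [smul_mul_assoc]
    _ = eps k H c • (a * b) := by
        rw [← Finset.smul_sum]
        congr 1
        calc ∑ j ∈ (ℛ k b).index, eps k H ((ℛ k b).left j) • (a * (ℛ k b).right j)
            = a * ∑ j ∈ (ℛ k b).index, eps k H ((ℛ k b).left j) • (ℛ k b).right j := by
              rw [Finset.mul_sum]
              exact Finset.sum_congr rfl fun j _ => (mul_smul_comm _ _ _).symm
          _ = a * b := by rw [sum_eps_left (ℛ k b)]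

lemma field_star :
    mu k H ∘ₗ sig k H (adAct k H) (trivR k H) = mu k H := by
  apply TensorProduct.ext'
  intro a b
  simp only [LinearMap.coe_comp, Function.comp_apply]
  rw [sig_tmul (ℛ k a) b, map_sum]
  have : ∑ i ∈ (ℛ k a).index, mu k H (adAct k H ((ℛ k a).left i ⊗ₜ[k] b) ⊗ₜ[k] (ℛ k a).right i)
      = conv (delta k H) (Lb b) LinearMap.id a := by
    rw [conv_apply_repr (ℛ k a)]
    exact Finset.sum_congr rfl fun i _ => by rw [mu_tmul]; rfl
  rw [this, conv_Lb_id, LinearMap.mulRight_apply, mu_tmul]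

end Fields

/-- Lemma 3.16: with `⇀` the left adjoint action and `↼` the trivial right
action, `(H,⇀,↼)` is a matched pair of actions if and only if `Δ` is left linear with
respect to `⇀`, i.e. `Δ(a⇀b) = (a₁⇀b₁)⊗(a₂⇀b₂)`. -/
theorem matchedPair_adjoint_iff_comul_linear :
    MatchedPairOfActions k H (adAct k H) (trivR k H) ↔
      delta k H ∘ₗ adAct k H = map (adAct k H) (adAct k H) ∘ₗ dd k H := by
  constructor
  · intro h
    exact h.comul_l
  · intro h
    refine ⟨field_one_act, field_mul_act, ?_, ?_, h, field_counit_l, field_comul_r,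
      field_counit_r, field_mp1, ?_, field_mp3, field_mp4, field_star⟩
    · intro a
      rw [trivR_tmul]
      simp [eps_apply]
    · intro a b c
      rw [trivR_tmul, trivR_tmul, trivR_tmul, smul_smul, eps_apply, eps_apply, eps_apply,
        Bialgebra.counit_mul, mul_comm]
    · intro b
      rw [trivR_tmul]

end
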